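/- Let A ∈ ℝ^{m×n} with nonzero rows, Ax = b consistent, x⁰ arbitrary, x₀* = A†b + (I - A†A)x⁰, and let (xᵏ) be the RrDR iterates with relaxation α ∈ (0,1) and r reflections per step sampled independently with row probabilities ‖a_i‖²/‖A‖_F². Then E[‖xᵏ - x₀*‖²] ≤ (α² + (1-α)² + 2α(1-α)(1 - 2σ²_min(A)/‖A‖_F²)ʳ)ᵏ ‖x⁰ - x₀*‖². -/

import Mathlib

open Matrix



namespace RrDRaux

variable {m n : ℕ}

lemma dot_self_nonneg (v : Fin n → ℝ) : 0 ≤ v ⬝ᵥ v :=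
  Finset.sum_nonneg fun _ _ => mul_self_nonneg _

lemma dot_self_pos {v : Fin n → ℝ} (hv : v ≠ 0) : 0 < v ⬝ᵥ v := by
  rcases Function.ne_iff.mp hv with ⟨j, hj⟩
  exact Finset.sum_pos' (fun i _ => mul_self_nonneg _)
    ⟨j, Finset.mem_univ j, mul_self_pos.mpr hj⟩

lemma eq_zero_of_dot_self_eq_zero {v : Fin n → ℝ} (h : v ⬝ᵥ v = 0) : v = 0 := by
  by_contra hv
  exact absurd h (ne_of_gt (dot_self_pos hv))

lemma sum_sq_eq_dot (v : Fin n → ℝ) : ∑ j, (v j)^2 = v ⬝ᵥ v := by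
  simp [dotProduct, sq]

lemma mulVec_sum {ι : Type*} {s : Finset ι} (M : Matrix (Fin n) (Fin n) ℝ) (f : ι → Fin n → ℝ) :
    M *ᵥ (∑ i ∈ s, f i) = ∑ i ∈ s, M *ᵥ f i := by
  have := map_sum M.mulVecLin f s
  simpa only [Matrix.mulVecLin_apply] using this

lemma sum_dot {ι : Type*} (s : Finset ι) (f : ι → Fin n → ℝ) (y : Fin n → ℝ) :
    (∑ i ∈ s, f i) ⬝ᵥ y = ∑ i ∈ s, f i ⬝ᵥ y := by
  simp only [dotProduct, Finset.sum_apply, Finset.sum_mul]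
  exact Finset.sum_comm

lemma dot_sum {ι : Type*} (s : Finset ι) (y : Fin n → ℝ) (f : ι → Fin n → ℝ) :
    y ⬝ᵥ (∑ i ∈ s, f i) = ∑ i ∈ s, y ⬝ᵥ f i := by
  simp only [dotProduct, Finset.sum_apply, Finset.mul_sum]
  exact Finset.sum_comm

lemma sq_matrix_herm (A : Matrix (Fin m) (Fin n) ℝ) : (Aᵀ * A).IsHermitian := by
  have h : Aᴴ = Aᵀ := Matrix.conjTranspose_eq_transpose_of_trivial A
  rw [← h]; exact isHermitian_conjTranspose_mul_self A

lemma sq_matrix_psd (A : Matrix (Fin m) (Fin n) ℝ) : (Aᵀ * A).PosSemidef := by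
  have h : Aᴴ = Aᵀ := Matrix.conjTranspose_eq_transpose_of_trivial A
  rw [← h]; exact posSemidef_conjTranspose_mul_self A

lemma trace_eq_sum_eigen {S : Matrix (Fin n) (Fin n) ℝ} (hS : S.IsHermitian) :
    S.trace = ∑ i, hS.eigenvalues i := by
  rw [hS.trace_eq_sum_eigenvalues]
  simp

lemma dot_symm_swap {S : Matrix (Fin n) (Fin n) ℝ} (hST : Sᵀ = S) (x y : Fin n → ℝ) :
    x ⬝ᵥ (S *ᵥ y) = (S *ᵥ x) ⬝ᵥ y := by
  conv_rhs => rw [← hST, mulVec_transpose]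
  rw [dotProduct_mulVec]

lemma dot_transpose_mulVec (A : Matrix (Fin m) (Fin n) ℝ) (x : Fin n → ℝ) (u : Fin m → ℝ) :
    x ⬝ᵥ (Aᵀ *ᵥ u) = (A *ᵥ x) ⬝ᵥ u := by
  rw [dotProduct_mulVec, vecMul_transpose]

lemma pow_mulVec_eig {S : Matrix (Fin n) (Fin n) ℝ} {c lam : ℝ} {v : Fin n → ℝ}
    (hv : S *ᵥ v = lam • v) (r : ℕ) :
    ((1 - c • S)^r) *ᵥ v = (1 - c*lam)^r • v := by
  induction r with
  | zero => simp
  | succ r ih =>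
    have hM : (1 - c • S) *ᵥ v = (1 - c*lam) • v := by
      rw [sub_mulVec, one_mulVec, smul_mulVec, hv, smul_smul, sub_smul, one_smul]
    rw [pow_succ, ← mulVec_mulVec, hM, mulVec_smul, ih, smul_smul, ← pow_succ']

end RrDRaux


namespace RrDRaux

variable {m n : ℕ}

lemma key_spec (A : Matrix (Fin m) (Fin n) ℝ) (μ sF : ℝ)
    (hsF : sF = ∑ i, ∑ j, (A i j)^2) (hμpos : 0 < μ)
    (hμeig : ∃ v : Fin n → ℝ, v ≠ 0 ∧ (Aᵀ * A) *ᵥ v = μ • v)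
    (hμmin : ∀ lam : ℝ, lam ≠ 0 →
      (∃ v : Fin n → ℝ, v ≠ 0 ∧ (Aᵀ * A) *ᵥ v = lam • v) → μ ≤ lam) :
    0 < sF ∧ μ ≤ sF ∧ ∀ (r : ℕ) (u : Fin m → ℝ),
      (Aᵀ *ᵥ u) ⬝ᵥ ((((1 : Matrix (Fin n) (Fin n) ℝ) - (2/sF) • (Aᵀ * A))^r) *ᵥ (Aᵀ *ᵥ u))
        ≤ (1 - 2*μ/sF)^r * ((Aᵀ *ᵥ u) ⬝ᵥ (Aᵀ *ᵥ u)) := by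
  classical
  set S : Matrix (Fin n) (Fin n) ℝ := Aᵀ * A with hSdef
  have hS : S.IsHermitian := sq_matrix_herm A
  have hST : Sᵀ = S := by
    have h : Sᴴ = Sᵀ := Matrix.conjTranspose_eq_transpose_of_trivial S
    rw [← h]; exact hS
  set lam : Fin n → ℝ := hS.eigenvalues with hlamdef
  set v : Fin n → Fin n → ℝ := fun j => ⇑(hS.eigenvectorBasis j) with hvdef
  have h_eig : ∀ j, S *ᵥ v j = lam j • v j := fun j => hS.mulVec_eigenvectorBasis j
  have h_inner : ∀ (x : EuclideanSpace ℝ (Fin n)) (y : EuclideanSpace ℝ (Fin n)),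
      (inner ℝ x y : ℝ) = (⇑x) ⬝ᵥ (⇑y) := by
    intro x y
    rw [PiLp.inner_apply]
    simp [dotProduct, mul_comm]
  have h_orth : ∀ i j, v i ⬝ᵥ v j = if i = j then 1 else 0 := by
    intro i j
    have := orthonormal_iff_ite.mp hS.eigenvectorBasis.orthonormal i j
    rw [h_inner] at this
    exact this
  have h_nz : ∀ j, v j ≠ 0 := by
    intro j hj
    apply hS.eigenvectorBasis.orthonormal.ne_zero j
    ext l
    exact congrFun hj l
  have h_nonneg : ∀ j, 0 ≤ lam j := fun j => (sq_matrix_psd A).eigenvalues_nonneg j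
  have h_trace : ∑ j, lam j = sF := by
    rw [← trace_eq_sum_eigen hS, hsF, Matrix.trace]
    rw [Finset.sum_comm]
    apply Finset.sum_congr rfl
    intro j _
    simp [Matrix.diag, hSdef, Matrix.mul_apply, sq]
  have h_min : ∀ j, lam j ≠ 0 → μ ≤ lam j := fun j hj =>
    hμmin _ hj ⟨v j, h_nz j, h_eig j⟩
  -- existence of an eigenbasis index with eigenvalue μ
  obtain ⟨v0, hv0ne, hv0eig⟩ := hμeig
  have h_exists : ∃ j1, lam j1 = μ := by
    by_contra hcon
    push_neg at hcon
    have hcoef : ∀ j, v j ⬝ᵥ v0 = 0 := by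
      intro j
      have h1 : v j ⬝ᵥ (S *ᵥ v0) = lam j * (v j ⬝ᵥ v0) := by
        rw [dot_symm_swap hST, h_eig, smul_dotProduct, smul_eq_mul]
      have h2 : v j ⬝ᵥ (S *ᵥ v0) = μ * (v j ⬝ᵥ v0) := by
        rw [hv0eig, dotProduct_smul, smul_eq_mul]
      have h3 : (lam j - μ) * (v j ⬝ᵥ v0) = 0 := by
        rw [sub_mul, h1.symm.trans h2]; ring
      rcases mul_eq_zero.mp h3 with h | h
      · exact absurd (by linarith [sub_eq_zero.mp h] : lam j = μ) (hcon j)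
      · exact h
    -- then v0 = 0
    apply hv0ne
    set w0 : EuclideanSpace ℝ (Fin n) := WithLp.toLp 2 v0 with hw0
    have hsum := hS.eigenvectorBasis.sum_repr w0
    have hrepr : ∀ j, hS.eigenvectorBasis.repr w0 j = 0 := by
      intro j
      rw [hS.eigenvectorBasis.repr_apply_apply, h_inner]
      exact hcoef j
    have : w0 = 0 := by
      rw [← hsum]
      apply Finset.sum_eq_zero
      intro j _
      rw [hrepr, zero_smul]
    ext l
    exact congrFun (congrArg (fun (x : EuclideanSpace ℝ (Fin n)) => (x : Fin n → ℝ)) this) l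
  obtain ⟨j1, hj1⟩ := h_exists
  have hsFpos : 0 < sF := by
    have h1 : lam j1 ≤ ∑ j, lam j :=
      Finset.single_le_sum (fun j _ => h_nonneg j) (Finset.mem_univ j1)
    rw [h_trace, hj1] at h1
    linarith
  have hμsF : μ ≤ sF := by
    have h1 : lam j1 ≤ ∑ j, lam j :=
      Finset.single_le_sum (fun j _ => h_nonneg j) (Finset.mem_univ j1)
    rw [h_trace, hj1] at h1
    exact h1
  refine ⟨hsFpos, hμsF, ?_⟩
  intro r u
  set w : Fin n → ℝ := Aᵀ *ᵥ u with hwdef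
  set c : Fin n → ℝ := fun j => v j ⬝ᵥ w with hcdef
  have hc0 : ∀ j, lam j = 0 → c j = 0 := by
    intro j hj
    have h1 : (A *ᵥ v j) ⬝ᵥ (A *ᵥ v j) = 0 := by
      have h2 : v j ⬝ᵥ (S *ᵥ v j) = (A *ᵥ v j) ⬝ᵥ (A *ᵥ v j) := by
        rw [hSdef, ← mulVec_mulVec, dot_transpose_mulVec]
      rw [← h2, h_eig, hj, zero_smul, dotProduct_zero]
    have h3 : A *ᵥ v j = 0 := eq_zero_of_dot_self_eq_zero h1
    have : c j = (A *ᵥ v j) ⬝ᵥ u := by rw [hcdef]; exact dot_transpose_mulVec A (v j) u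
    rw [this, h3, zero_dotProduct]
  -- expansion of w in the eigenbasis
  have hw_expand : w = ∑ j, c j • v j := by
    set w0 : EuclideanSpace ℝ (Fin n) := WithLp.toLp 2 w with hw0
    have hsum := hS.eigenvectorBasis.sum_repr w0
    have hrepr : ∀ j, hS.eigenvectorBasis.repr w0 j = c j := by
      intro j
      rw [hS.eigenvectorBasis.repr_apply_apply, h_inner]
    have h1 : (∑ j, c j • hS.eigenvectorBasis j) = w0 := by
      rw [← hsum]
      exact Finset.sum_congr rfl fun j _ => by rw [hrepr]
    have h2 := congrArg WithLp.ofLp h1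
    rw [WithLp.ofLp_sum] at h2
    exact h2.symm
  set M : Matrix (Fin n) (Fin n) ℝ := (1 : Matrix (Fin n) (Fin n) ℝ) - (2/sF) • S with hMdef
  set t : Fin n → ℝ := fun j => 1 - (2/sF) * lam j with htdef
  have hMr : ∀ j, (M^r) *ᵥ v j = (t j)^r • v j := fun j => pow_mulVec_eig (h_eig j) r
  have hlhs : w ⬝ᵥ ((M^r) *ᵥ w) = ∑ j, (t j)^r * (c j)^2 := by
    conv_lhs => rw [hw_expand]
    rw [mulVec_sum]
    rw [sum_dot]
    apply Finset.sum_congr rfl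
    intro j _
    rw [dot_sum]
    rw [Finset.sum_eq_single j]
    · rw [mulVec_smul, hMr, smul_dotProduct, dotProduct_smul, dotProduct_smul, h_orth,
        if_pos rfl]
      simp [smul_eq_mul]; ring
    · intro j' _ hj'
      rw [mulVec_smul, hMr, smul_dotProduct, dotProduct_smul, dotProduct_smul, h_orth,
        if_neg (Ne.symm hj')]
      simp
    · intro h; exact absurd (Finset.mem_univ j) h
  have hrhs : w ⬝ᵥ w = ∑ j, (c j)^2 := by
    conv_lhs => rw [hw_expand]
    rw [sum_dot]
    apply Finset.sum_congr rfl
    intro j _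
    rw [dot_sum]
    rw [Finset.sum_eq_single j]
    · rw [smul_dotProduct, dotProduct_smul, h_orth, if_pos rfl]
      simp [smul_eq_mul]; ring
    · intro j' _ hj'
      rw [smul_dotProduct, dotProduct_smul, h_orth, if_neg (Ne.symm hj')]
      simp
    · intro h; exact absurd (Finset.mem_univ j) h
  rw [hlhs, hrhs, Finset.mul_sum]
  apply Finset.sum_le_sum
  intro j _
  by_cases hcj : c j = 0
  · rw [hcj]; simp
  have hlamj : lam j ≠ 0 := fun h => hcj (hc0 j h)
  have hmulj : μ ≤ lam j := h_min j hlamj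
  by_cases hlam_mu : lam j = μ
  · have : t j = 1 - 2*μ/sF := by rw [htdef]; simp only []; rw [hlam_mu]; ring
    rw [this]
  · -- lam j ≠ μ, hence j ≠ j1 and lam j + μ ≤ sF
    have hjj1 : j ≠ j1 := fun h => hlam_mu (h ▸ hj1)
    have hsum2 : lam j + lam j1 ≤ ∑ i, lam i := by
      have h1 : ∑ i ∈ ({j, j1} : Finset (Fin n)), lam i ≤ ∑ i, lam i := by
        apply Finset.sum_le_sum_of_subset_of_nonneg (Finset.subset_univ _)
        intro i _ _; exact h_nonneg i
      rwa [Finset.sum_pair hjj1] at h1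
    rw [h_trace, hj1] at hsum2
    have habs : |t j| ≤ 1 - 2*μ/sF := by
      rw [abs_le]
      constructor
      · show -(1 - 2*μ/sF) ≤ 1 - (2/sF) * lam j

        have h1 : (2/sF) * lam j ≤ (2/sF) * (sF - μ) := by
          apply mul_le_mul_of_nonneg_left (by linarith) (by positivity)
        have h2 : (2/sF) * (sF - μ) = 2 - 2*μ/sF := by field_simp
        linarith
      · show 1 - (2/sF) * lam j ≤ 1 - 2*μ/sF
        have h1 : (2/sF) * μ ≤ (2/sF) * lam j := by
          apply mul_le_mul_of_nonneg_left hmulj (by positivity)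
        have h2 : (2/sF) * μ = 2*μ/sF := by ring
        linarith
    have h3 : (t j)^r ≤ (1 - 2*μ/sF)^r := by
      calc (t j)^r ≤ |(t j)^r| := le_abs_self _
        _ = |t j|^r := abs_pow _ _
        _ ≤ (1 - 2*μ/sF)^r := pow_le_pow_left₀ (abs_nonneg _) habs r
    exact mul_le_mul_of_nonneg_right h3 (sq_nonneg _)

end RrDRaux


namespace RrDRaux

variable {m n : ℕ}

/-- Homogeneous reflection in the hyperplane orthogonal to `a`. -/
noncomputable def refl (a w : Fin n → ℝ) : Fin n → ℝ := w - (2 * (a ⬝ᵥ w) / (a ⬝ᵥ a)) • a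

lemma refl_def (a w : Fin n → ℝ) : refl a w = w - (2 * (a ⬝ᵥ w) / (a ⬝ᵥ a)) • a := rfl

lemma refl_isom {a : Fin n → ℝ} (ha : a ≠ 0) (w : Fin n → ℝ) :
    refl a w ⬝ᵥ refl a w = w ⬝ᵥ w := by
  have h : a ⬝ᵥ a ≠ 0 := ne_of_gt (dot_self_pos ha)
  simp only [refl, sub_dotProduct, dotProduct_sub, smul_dotProduct, dotProduct_smul,
    smul_eq_mul, dotProduct_comm a w]
  field_simp
  ring

lemma fold_isom (A : Matrix (Fin m) (Fin n) ℝ) (hrows : ∀ i, A i ≠ 0) :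
    ∀ (L : List (Fin m)) (w : Fin n → ℝ),
      (L.foldl (fun z i => refl (A i) z) w) ⬝ᵥ (L.foldl (fun z i => refl (A i) z) w)
        = w ⬝ᵥ w := by
  intro L
  induction L with
  | nil => intro w; rfl
  | cons i L ih =>
    intro w
    rw [List.foldl_cons, ih, refl_isom (hrows i)]

lemma fold_row (A : Matrix (Fin m) (Fin n) ℝ) :
    ∀ (L : List (Fin m)) (u : Fin m → ℝ),
      ∃ u', L.foldl (fun z i => refl (A i) z) (Aᵀ *ᵥ u) = Aᵀ *ᵥ u' := by
  intro L
  induction L with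
  | nil => intro u; exact ⟨u, rfl⟩
  | cons i L ih =>
    intro u
    rw [List.foldl_cons]
    have h1 : refl (A i) (Aᵀ *ᵥ u)
        = Aᵀ *ᵥ (u - (2 * (A i ⬝ᵥ (Aᵀ *ᵥ u)) / (A i ⬝ᵥ A i)) • (Pi.single i 1 : Fin m → ℝ)) := by
      rw [refl, mulVec_sub, mulVec_smul, mulVec_single]
      congr 1
      ext j
      simp [Matrix.transpose_apply]
    rw [h1]
    exact ih _

lemma exp_refl (A : Matrix (Fin m) (Fin n) ℝ) (hrows : ∀ i, A i ≠ 0)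
    (sF : ℝ) (hsF : sF = ∑ i, ∑ j, (A i j)^2) (hsF0 : sF ≠ 0)
    (p : Fin m → ℝ) (hp : ∀ i, p i = (∑ j, (A i j)^2)/sF) (w : Fin n → ℝ) :
    ∑ i, p i • refl (A i) w
      = w - (2/sF) • (((Aᵀ * A) : Matrix (Fin n) (Fin n) ℝ) *ᵥ w) := by
  have hpsum : ∑ i, p i = 1 := by
    have : ∑ i, p i = (∑ i, ∑ j, (A i j)^2) / sF := by
      rw [Finset.sum_div]
      exact Finset.sum_congr rfl fun i _ => hp i
    rw [this, ← hsF, div_self hsF0]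
  funext l
  have hAAw : ((Aᵀ * A) *ᵥ w) l = ∑ i, A i l * (A i ⬝ᵥ w) := by
    rw [← mulVec_mulVec]
    simp only [mulVec, dotProduct, Matrix.transpose_apply]
  have hLHS : (∑ i, p i • refl (A i) w) l
      = ∑ i, (p i * w l - p i * ((2 * (A i ⬝ᵥ w) / (A i ⬝ᵥ A i)) * A i l)) := by
    rw [Finset.sum_apply]
    apply Finset.sum_congr rfl
    intro i _
    simp [refl, mul_sub]
  rw [hLHS, Finset.sum_sub_distrib, ← Finset.sum_mul, hpsum, one_mul]
  have hterm : ∀ i, p i * ((2 * (A i ⬝ᵥ w) / (A i ⬝ᵥ A i)) * A i l)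
      = (2/sF) * (A i l * (A i ⬝ᵥ w)) := by
    intro i
    have hai : A i ⬝ᵥ A i ≠ 0 := ne_of_gt (dot_self_pos (hrows i))
    rw [hp i, sum_sq_eq_dot]
    field_simp
  have : ∑ i, p i * ((2 * (A i ⬝ᵥ w) / (A i ⬝ᵥ A i)) * A i l)
      = (2/sF) * ∑ i, A i l * (A i ⬝ᵥ w) := by
    rw [Finset.mul_sum]
    exact Finset.sum_congr rfl fun i _ => hterm i
  rw [this, ← hAAw]
  simp [Pi.smul_apply]

lemma exp_fold (A : Matrix (Fin m) (Fin n) ℝ) (hrows : ∀ i, A i ≠ 0)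
    (sF : ℝ) (hsF : sF = ∑ i, ∑ j, (A i j)^2) (hsF0 : sF ≠ 0)
    (p : Fin m → ℝ) (hp : ∀ i, p i = (∑ j, (A i j)^2)/sF) :
    ∀ (r : ℕ) (w : Fin n → ℝ),
      ∑ blk : Fin r → Fin m, (∏ j, p (blk j)) •
          ((List.ofFn blk).foldl (fun z i => refl (A i) z) w)
        = ((((1 : Matrix (Fin n) (Fin n) ℝ) - (2/sF) • (Aᵀ * A)))^r) *ᵥ w := by
  intro r
  induction r with
  | zero =>
    intro w
    simp [List.ofFn_zero]
  | succ r ih =>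
    intro w
    rw [← Equiv.sum_comp (Fin.consEquiv (fun _ : Fin (r+1) => Fin m))]
    rw [Fintype.sum_prod_type]
    have hterm : ∀ (i : Fin m) (blk : Fin r → Fin m),
        (∏ j, p ((Fin.consEquiv (fun _ : Fin (r+1) => Fin m)) (i, blk) j)) •
            ((List.ofFn ((Fin.consEquiv (fun _ : Fin (r+1) => Fin m)) (i, blk))).foldl
              (fun z i => refl (A i) z) w)
          = p i • ((∏ j, p (blk j)) •
              ((List.ofFn blk).foldl (fun z i => refl (A i) z) (refl (A i) w))) := by
      intro i blk
      have h1 : ((Fin.consEquiv (fun _ : Fin (r+1) => Fin m)) (i, blk)) = Fin.cons i blk := rfl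
      rw [h1]
      rw [Fin.prod_univ_succ]
      simp only [Fin.cons_zero, Fin.cons_succ]
      rw [List.ofFn_succ]
      simp only [Fin.cons_zero, Fin.cons_succ, List.foldl_cons]
      rw [mul_smul]
    calc ∑ i, ∑ blk : Fin r → Fin m,
          (∏ j, p ((Fin.consEquiv (fun _ : Fin (r+1) => Fin m)) (i, blk) j)) •
            ((List.ofFn ((Fin.consEquiv (fun _ : Fin (r+1) => Fin m)) (i, blk))).foldl
              (fun z i => refl (A i) z) w)
        = ∑ i, p i • (∑ blk : Fin r → Fin m, (∏ j, p (blk j)) •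
            ((List.ofFn blk).foldl (fun z i => refl (A i) z) (refl (A i) w))) := by
          apply Finset.sum_congr rfl
          intro i _
          rw [Finset.smul_sum]
          exact Finset.sum_congr rfl fun blk _ => hterm i blk
      _ = ∑ i, p i • ((((1 : Matrix (Fin n) (Fin n) ℝ) - (2/sF) • (Aᵀ * A)))^r *ᵥ (refl (A i) w)) := by
          exact Finset.sum_congr rfl fun i _ => by rw [ih]
      _ = (((1 : Matrix (Fin n) (Fin n) ℝ) - (2/sF) • (Aᵀ * A)))^r *ᵥ
            (∑ i, p i • refl (A i) w) := by
          rw [mulVec_sum]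
          exact Finset.sum_congr rfl fun i _ => by rw [mulVec_smul]
      _ = (((1 : Matrix (Fin n) (Fin n) ℝ) - (2/sF) • (Aᵀ * A)))^(r+1) *ᵥ w := by
          rw [exp_refl A hrows sF hsF hsF0 p hp]
          have : ((1 : Matrix (Fin n) (Fin n) ℝ) - (2/sF) • (Aᵀ * A)) *ᵥ w
              = w - (2/sF) • ((Aᵀ * A) *ᵥ w) := by
            rw [sub_mulVec, one_mulVec, smul_mulVec]
          rw [← this, mulVec_mulVec, ← pow_succ]

lemma weights_sum_one (p : Fin m → ℝ) (hpsum : ∑ i, p i = 1) (r : ℕ) :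
    ∑ blk : Fin r → Fin m, (∏ j, p (blk j)) = 1 := by
  rw [← Fintype.piFinset_univ, Finset.sum_prod_piFinset]
  simp [hpsum]

end RrDRaux


open RrDRaux in
/-- RrDR linear convergence in expectation (Theorem 3.1): with rows sampled with
probability `‖aᵢ‖²/‖A‖_F²`, `r` independent reflections per step and `α`-relaxed
averaging, and with `x₀* = A†b + (I - A†A)x⁰`,
`E[‖xᵏ - x₀*‖²] ≤ (α² + (1-α)² + 2α(1-α)(1 - 2σ²_min(A)/‖A‖_F²)ʳ)ᵏ ‖x⁰ - x₀*‖²`.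
Here `μ = σ²_min(A)` is the smallest nonzero eigenvalue of `AᵀA`, the pseudoinverse is
characterized by the Penrose conditions, and the expectation over the `k·r` sampled row
indices is written as the explicit weighted sum over `s : Fin k → Fin r → Fin m`. -/
theorem stmt_18 {m n : ℕ} (A : Matrix (Fin m) (Fin n) ℝ)
    (hrows : ∀ i, A i ≠ 0)
    (xs : Fin n → ℝ) (b : Fin m → ℝ) (hb : b = A.mulVec xs)
    (Adag : Matrix (Fin n) (Fin m) ℝ)
    (hP1 : A * Adag * A = A) (hP2 : Adag * A * Adag = Adag)
    (hP3 : (A * Adag)ᵀ = A * Adag) (hP4 : (Adag * A)ᵀ = Adag * A)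
    (α : ℝ) (hα0 : 0 < α) (hα1 : α < 1) (r : ℕ) (hr : 1 ≤ r)
    (sF : ℝ) (hsF : sF = ∑ i, ∑ j, (A i j) ^ 2)
    (p : Fin m → ℝ) (hp : ∀ i, p i = (∑ j, (A i j) ^ 2) / sF)
    (μ : ℝ) (hμpos : 0 < μ)
    (hμeig : ∃ v : Fin n → ℝ, v ≠ 0 ∧ (Aᵀ * A).mulVec v = μ • v)
    (hμmin : ∀ lam : ℝ, lam ≠ 0 → (∃ v : Fin n → ℝ, v ≠ 0 ∧ (Aᵀ * A).mulVec v = lam • v) →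
      μ ≤ lam)
    (step : (Fin r → Fin m) → (Fin n → ℝ) → (Fin n → ℝ))
    (hstep : ∀ blk y, step blk y = (1 - α) • y
      + α • ((List.ofFn blk).foldl
          (fun z i => z - (2 * ((∑ j, A i j * z j) - b i) / ∑ j, (A i j) ^ 2) • A i) y))
    (x0 : Fin n → ℝ)
    (X : ∀ k : ℕ, (Fin k → Fin r → Fin m) → (Fin n → ℝ))
    (hX : ∀ k (s : Fin k → Fin r → Fin m), X k s = (List.ofFn s).foldl (fun y blk => step blk y) x0)
    (xstar : Fin n → ℝ)
    (hxstar : xstar = Adag.mulVec b + (1 - Adag * A).mulVec x0) :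
    ∀ k : ℕ,
      (∑ s : Fin k → Fin r → Fin m,
          (∏ i, ∏ j, p (s i j)) * ∑ l, (X k s l - xstar l) ^ 2) ≤
        (α ^ 2 + (1 - α) ^ 2 + 2 * α * (1 - α) * (1 - 2 * μ / sF) ^ r) ^ k *
          ∑ l, (x0 l - xstar l) ^ 2 := by
  classical
  obtain ⟨hsFpos, hμsF, hspec⟩ := key_spec A μ sF hsF hμpos hμeig hμmin
  have hsF0 : sF ≠ 0 := ne_of_gt hsFpos
  have hpnn : ∀ i, 0 ≤ p i := by
    intro i
    rw [hp i]
    exact div_nonneg (Finset.sum_nonneg fun _ _ => sq_nonneg _) hsFpos.le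
  set ρ : ℝ := α ^ 2 + (1 - α) ^ 2 + 2 * α * (1 - α) * (1 - 2 * μ / sF) ^ r with hρdef
  have hγabs : |1 - 2*μ/sF| ≤ 1 := by
    rw [abs_le]
    constructor
    · have h1 : 2*μ/sF ≤ 2 := by rw [div_le_iff₀ hsFpos]; linarith
      linarith
    · have h2 : 0 < 2*μ/sF := by positivity
      linarith
  have hγr : |(1 - 2*μ/sF)^r| ≤ 1 := by
    rw [abs_pow]
    exact pow_le_one₀ (abs_nonneg _) hγabs
  have hρ0 : 0 ≤ ρ := by
    rw [hρdef]
    have h1 := (abs_le.mp hγr).1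
    nlinarith [sq_nonneg (1 - 2*α), mul_pos hα0 (by linarith : (0:ℝ) < 1 - α)]
  -- xstar solves the system
  have hAx : A *ᵥ xstar = b := by
    rw [hxstar, mulVec_add, mulVec_mulVec, mulVec_mulVec, Matrix.mul_sub, Matrix.mul_one]
    have h1 : A * (Adag * A) = A := by rw [← Matrix.mul_assoc]; exact hP1
    rw [h1, sub_self, zero_mulVec, add_zero, hb, mulVec_mulVec, hP1]
  have hbdot : ∀ i, A i ⬝ᵥ xstar = b i := fun i => congrFun hAx i
  -- conjugation of affine fold to homogeneous fold
  have hconj : ∀ (L : List (Fin m)) (y : Fin n → ℝ),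
      L.foldl (fun z i => z - (2 * ((∑ j, A i j * z j) - b i) / ∑ j, (A i j) ^ 2) • A i) y - xstar
        = L.foldl (fun z i => refl (A i) z) (y - xstar) := by
    intro L
    induction L with
    | nil => intro y; rfl
    | cons i L ih =>
      intro y
      rw [List.foldl_cons, List.foldl_cons, ih]
      congr 1
      show y - (2 * ((∑ j, A i j * y j) - b i) / ∑ j, (A i j) ^ 2) • A i - xstar
          = refl (A i) (y - xstar)
      rw [RrDRaux.refl_def]
      have h1 : (∑ j, A i j * y j) = A i ⬝ᵥ y := rfl
      have h2 : (∑ j, (A i j)^2) = A i ⬝ᵥ A i := sum_sq_eq_dot (A i)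
      rw [h1, h2, dotProduct_sub, hbdot i, sub_right_comm]
  have hstepconj : ∀ blk (y : Fin n → ℝ), step blk y - xstar
      = (1 - α) • (y - xstar)
        + α • ((List.ofFn blk).foldl (fun z i => refl (A i) z) (y - xstar)) := by
    intro blk y
    rw [← hconj (List.ofFn blk) y, hstep]
    funext l
    simp only [Pi.add_apply, Pi.smul_apply, Pi.sub_apply, smul_eq_mul]
    ring
  -- one-step contraction
  have hOneStep : ∀ y : Fin n → ℝ, (∃ u, y - xstar = Aᵀ *ᵥ u) →
      (∑ blk : Fin r → Fin m, (∏ j, p (blk j)) * ∑ l, (step blk y l - xstar l)^2)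
        ≤ ρ * ∑ l, (y l - xstar l)^2 := by
    rintro y ⟨u, hu⟩
    have hexpand : ∀ g : Fin n → ℝ,
        ((1-α) • (y - xstar) + α • g) ⬝ᵥ ((1-α) • (y - xstar) + α • g)
          = (1-α)^2 * ((y - xstar) ⬝ᵥ (y - xstar)) + α^2 * (g ⬝ᵥ g)
            + 2*α*(1-α)*((y - xstar) ⬝ᵥ g) := by
      intro g
      simp only [add_dotProduct, dotProduct_add, smul_dotProduct, dotProduct_smul, smul_eq_mul,
        dotProduct_comm g (y - xstar)]
      ring
    have hsq : ∀ blk : Fin r → Fin m, ∑ l, (step blk y l - xstar l)^2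
        = (1-α)^2 * ((y - xstar) ⬝ᵥ (y - xstar)) + α^2 * ((y - xstar) ⬝ᵥ (y - xstar))
          + 2*α*(1-α)*((y - xstar) ⬝ᵥ
              ((List.ofFn blk).foldl (fun z i => refl (A i) z) (y - xstar))) := by
      intro blk
      have h1 : ∑ l, (step blk y l - xstar l)^2 = (step blk y - xstar) ⬝ᵥ (step blk y - xstar) := by
        simp [dotProduct, sq]
      rw [h1, hstepconj, hexpand, fold_isom A hrows]
    have hweights : ∑ blk : Fin r → Fin m, (∏ j, p (blk j)) = 1 := by
      apply weights_sum_one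
      have : ∑ i, p i = (∑ i, ∑ j, (A i j)^2) / sF := by
        rw [Finset.sum_div]
        exact Finset.sum_congr rfl fun i _ => hp i
      rw [this, ← hsF, div_self hsF0]
    have hlin : ∑ blk : Fin r → Fin m, (∏ j, p (blk j)) *
        ((y - xstar) ⬝ᵥ ((List.ofFn blk).foldl (fun z i => refl (A i) z) (y - xstar)))
          = (y - xstar) ⬝ᵥ ((((1 : Matrix (Fin n) (Fin n) ℝ) - (2/sF) • (Aᵀ * A)))^r
              *ᵥ (y - xstar)) := by
      rw [← exp_fold A hrows sF hsF hsF0 p hp r (y - xstar), dot_sum]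
      exact Finset.sum_congr rfl fun blk _ => by rw [dotProduct_smul, smul_eq_mul]
    have hkey : (y - xstar) ⬝ᵥ ((((1 : Matrix (Fin n) (Fin n) ℝ) - (2/sF) • (Aᵀ * A)))^r
        *ᵥ (y - xstar)) ≤ (1 - 2*μ/sF)^r * ((y - xstar) ⬝ᵥ (y - xstar)) := by
      rw [hu]
      exact hspec r u
    have hEsq : ∑ l, (y l - xstar l)^2 = (y - xstar) ⬝ᵥ (y - xstar) := by
      simp [dotProduct, sq]
    calc (∑ blk : Fin r → Fin m, (∏ j, p (blk j)) * ∑ l, (step blk y l - xstar l)^2)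
        = (∑ blk : Fin r → Fin m, (∏ j, p (blk j)))
            * (((1-α)^2 + α^2) * ((y - xstar) ⬝ᵥ (y - xstar)))
          + 2*α*(1-α) * ∑ blk : Fin r → Fin m, (∏ j, p (blk j)) *
              ((y - xstar) ⬝ᵥ ((List.ofFn blk).foldl (fun z i => refl (A i) z) (y - xstar))) := by
          rw [Finset.sum_mul, Finset.mul_sum, ← Finset.sum_add_distrib]
          apply Finset.sum_congr rfl
          intro blk _
          rw [hsq blk]
          ring
      _ = ((1-α)^2 + α^2) * ((y - xstar) ⬝ᵥ (y - xstar))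
          + 2*α*(1-α) * ((y - xstar) ⬝ᵥ ((((1 : Matrix (Fin n) (Fin n) ℝ) - (2/sF) • (Aᵀ * A)))^r
              *ᵥ (y - xstar))) := by
          rw [hweights, hlin, one_mul]
      _ ≤ ((1-α)^2 + α^2) * ((y - xstar) ⬝ᵥ (y - xstar))
          + 2*α*(1-α) * ((1 - 2*μ/sF)^r * ((y - xstar) ⬝ᵥ (y - xstar))) := by
          have h2 : (0:ℝ) ≤ 2*α*(1-α) := by nlinarith
          exact (add_le_add_iff_left _).mpr (mul_le_mul_of_nonneg_left hkey h2)
      _ = ρ * ∑ l, (y l - xstar l)^2 := by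
          rw [hEsq, hρdef]; ring
  -- Row-space membership
  have hx0row : x0 - xstar = Aᵀ *ᵥ ((Adagᵀ * Adag) *ᵥ (A *ᵥ x0 - b)) := by
    have hAdag : Adag = Aᵀ * Adagᵀ * Adag := by
      conv_lhs => rw [← hP2]
      congr 1
      rw [← hP4, transpose_mul]
    have hRHS : Aᵀ *ᵥ ((Adagᵀ * Adag) *ᵥ (A *ᵥ x0 - b)) = (Adag * A) *ᵥ x0 - Adag *ᵥ b := by
      rw [mulVec_mulVec, ← Matrix.mul_assoc, ← hAdag, mulVec_sub, mulVec_mulVec]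
    rw [hRHS, hxstar, sub_mulVec, one_mulVec]
    abel
  have hstepRow : ∀ blk (y : Fin n → ℝ), (∃ u, y - xstar = Aᵀ *ᵥ u) →
      (∃ u', step blk y - xstar = Aᵀ *ᵥ u') := by
    rintro blk y ⟨u, hu⟩
    obtain ⟨u2, hu2⟩ := fold_row A (List.ofFn blk) u
    refine ⟨(1-α) • u + α • u2, ?_⟩
    rw [hstepconj, hu, hu2, mulVec_add, mulVec_smul, mulVec_smul]
  have hfoldRow : ∀ (L : List (Fin r → Fin m)) (y : Fin n → ℝ), (∃ u, y - xstar = Aᵀ *ᵥ u) →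
      (∃ u', L.foldl (fun y blk => step blk y) y - xstar = Aᵀ *ᵥ u') := by
    intro L
    induction L with
    | nil => intro y hy; exact hy
    | cons bl L ih =>
      intro y hy
      rw [List.foldl_cons]
      exact ih _ (hstepRow bl y hy)
  have hXrow : ∀ (k : ℕ) (t : Fin k → Fin r → Fin m), ∃ u, X k t - xstar = Aᵀ *ᵥ u := by
    intro k t
    rw [hX]
    exact hfoldRow _ x0 ⟨_, hx0row⟩
  -- snoc decomposition of the iterates
  have hXsnoc : ∀ (k : ℕ) (t : Fin k → Fin r → Fin m) (bl : Fin r → Fin m),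
      X (k+1) (Fin.snoc t bl) = step bl (X k t) := by
    intro k t bl
    rw [hX (k+1), List.ofFn_succ']
    have h1 : (fun i : Fin k => (Fin.snoc t bl : Fin (k+1) → Fin r → Fin m) (Fin.castSucc i)) = t := by
      funext i; simp
    rw [h1, Fin.snoc_last, List.concat_eq_append, List.foldl_append, List.foldl_cons, List.foldl_nil, ← hX k t]
  -- main induction
  intro k
  induction k with
  | zero =>
    have h0 : ∀ s : Fin 0 → Fin r → Fin m, X 0 s = x0 := by
      intro s
      rw [hX]
      simp
    simp [h0]
  | succ k ih =>
    rw [← Equiv.sum_comp (Fin.snocEquiv (fun _ : Fin (k+1) => (Fin r → Fin m)))]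
    rw [Fintype.sum_prod_type]
    rw [Finset.sum_comm]
    have hsummand : ∀ (t : Fin k → Fin r → Fin m) (bl : Fin r → Fin m),
        (∏ i, ∏ j, p ((Fin.snocEquiv (fun _ : Fin (k+1) => (Fin r → Fin m))) (bl, t) i j)) *
            ∑ l, (X (k+1) ((Fin.snocEquiv (fun _ : Fin (k+1) => (Fin r → Fin m))) (bl, t)) l
                - xstar l)^2
          = (∏ i, ∏ j, p (t i j)) *
              ((∏ j, p (bl j)) * ∑ l, (step bl (X k t) l - xstar l)^2) := by
      intro t bl
      have he : (Fin.snocEquiv (fun _ : Fin (k+1) => (Fin r → Fin m))) (bl, t)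
          = Fin.snoc t bl := rfl
      rw [he, hXsnoc k t bl, Fin.prod_univ_castSucc]
      simp only [Fin.snoc_castSucc, Fin.snoc_last]
      ring
    calc (∑ t : Fin k → Fin r → Fin m, ∑ bl : Fin r → Fin m,
            (∏ i, ∏ j, p ((Fin.snocEquiv (fun _ : Fin (k+1) => (Fin r → Fin m))) (bl, t) i j)) *
              ∑ l, (X (k+1) ((Fin.snocEquiv (fun _ : Fin (k+1) => (Fin r → Fin m))) (bl, t)) l
                - xstar l)^2)
        = ∑ t : Fin k → Fin r → Fin m, (∏ i, ∏ j, p (t i j)) *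
            (∑ bl : Fin r → Fin m, (∏ j, p (bl j)) * ∑ l, (step bl (X k t) l - xstar l)^2) := by
          apply Finset.sum_congr rfl
          intro t _
          rw [Finset.mul_sum]
          exact Finset.sum_congr rfl fun bl _ => hsummand t bl
      _ ≤ ∑ t : Fin k → Fin r → Fin m, (∏ i, ∏ j, p (t i j)) *
            (ρ * ∑ l, (X k t l - xstar l)^2) := by
          apply Finset.sum_le_sum
          intro t _
          apply mul_le_mul_of_nonneg_left (hOneStep (X k t) (hXrow k t))
          exact Finset.prod_nonneg fun i _ => Finset.prod_nonneg fun j _ => hpnn _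
      _ = ρ * ∑ t : Fin k → Fin r → Fin m, (∏ i, ∏ j, p (t i j)) *
            ∑ l, (X k t l - xstar l)^2 := by
          rw [Finset.mul_sum]
          exact Finset.sum_congr rfl fun t _ => by ring
      _ ≤ ρ * (ρ^k * ∑ l, (x0 l - xstar l)^2) := mul_le_mul_of_nonneg_left ih hρ0
      _ = ρ^(k+1) * ∑ l, (x0 l - xstar l)^2 := by ring
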